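/- Let λ : ℤ₊ → ℝ satisfy (UB). For all x, y ∈ ℤ₊ and t ≥ 0: e^{tL}(x,y) = −(λ(x)/λ(y)) · [ Σ_{z=0}^{y} e^{tL}(x+1,z) − Σ_{z=0}^{y} e^{tL}(x,z) ]. -/

import Mathlib

open Complex MeasureTheory Finset
open scoped Real ComplexOrder

/-- ψ_x(w) = ∏_{k=0}^{x} λ(k)/(λ(k)−w). -/
noncomputable def psiF (lam : ℕ → ℝ) (x : ℕ) (w : ℂ) : ℂ :=
  ∏ k ∈ Finset.range (x + 1), (lam k : ℂ) / ((lam k : ℂ) - w)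

/-- p_x(w) = ∏_{k=0}^{x−1} (λ(k)−w)/λ(k). -/
noncomputable def pF (lam : ℕ → ℝ) (x : ℕ) (w : ℂ) : ℂ :=
  ∏ k ∈ Finset.range x, (((lam k : ℂ) - w) / (lam k : ℂ))

/-- e^{tL}(x,y) := −(1/λ(y))·(1/(2πi)) ∮_{|w|=R} ψ_y(w) p_x(w) e^{−tw} dw,
the contour being the counterclockwise circle of radius R centred at 0. -/
noncomputable def eL (lam : ℕ → ℝ) (R t : ℝ) (x y : ℕ) : ℂ :=
  -(1 / (lam y : ℂ)) * ((2 * (Real.pi : ℂ) * Complex.I)⁻¹ *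
    ∮ w in C(0, R), psiF lam y w * pF lam x w * Complex.exp (-(t : ℂ) * w))

lemma psiF_succ (lam : ℕ → ℝ) (w : ℂ) (n : ℕ) :
    psiF lam (n + 1) w = psiF lam n w * ((lam (n+1) : ℂ) / ((lam (n+1) : ℂ) - w)) :=
  Finset.prod_range_succ (fun k => (lam k : ℂ) / ((lam k : ℂ) - w)) (n + 1)

lemma pF_succ (lam : ℕ → ℝ) (w : ℂ) (x : ℕ) :
    pF lam (x + 1) w = pF lam x w * (((lam x : ℂ) - w) / (lam x : ℂ)) :=
  Finset.prod_range_succ (fun k => ((lam k : ℂ) - w) / (lam k : ℂ)) x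

lemma P1 (lam : ℕ → ℝ) (w : ℂ) (h1 : ∀ k, (lam k : ℂ) ≠ 0)
    (h2 : ∀ k, (lam k : ℂ) - w ≠ 0) (y : ℕ) :
    w * ∑ z ∈ Finset.range (y + 1), (1 / (lam z : ℂ)) * psiF lam z w
      = psiF lam y w - 1 := by
  induction y with
  | zero =>
      have h10 := h1 0; have h20 := h2 0
      simp only [psiF, zero_add, Finset.prod_range_one, Finset.sum_range_one]
      field_simp
      ring
  | succ n ih =>
      rw [Finset.sum_range_succ, mul_add, ih, psiF_succ]
      set a := psiF lam n w with ha
      have hL := h1 (n+1); have hLw := h2 (n+1)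
      field_simp
      ring

lemma P2 (lam : ℕ → ℝ) (w : ℂ) (x : ℕ) (h1 : (lam x : ℂ) ≠ 0) :
    (lam x : ℂ) * (pF lam (x+1) w - pF lam x w) = -w * pF lam x w := by
  rw [pF_succ]
  set b := pF lam x w
  field_simp
  ring

lemma circleIntegrable_sum {ι : Type*} (s : Finset ι) (f : ι → ℂ → ℂ) (c : ℂ) (R : ℝ)
    (hf : ∀ i ∈ s, CircleIntegrable (f i) c R) :
    CircleIntegrable (fun w => ∑ i ∈ s, f i w) c R := by
  classical
  induction s using Finset.induction with
  | empty => simpa using circleIntegrable_const (0 : ℂ) c R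
  | @insert a s' ha ih =>
      simp only [Finset.sum_insert ha]
      exact (hf a (Finset.mem_insert_self a s')).add
        (ih fun i hi => hf i (Finset.mem_insert_of_mem hi))

lemma circleIntegral_add {f g : ℂ → ℂ} {c : ℂ} {R : ℝ} (hf : CircleIntegrable f c R)
    (hg : CircleIntegrable g c R) :
    (∮ w in C(c, R), (f w + g w)) = (∮ w in C(c, R), f w) + ∮ w in C(c, R), g w := by
  simp only [circleIntegral, smul_add, intervalIntegral.integral_add hf.out hg.out]

lemma circleIntegral_zero (c : ℂ) (R : ℝ) : (∮ _ in C(c, R), (0:ℂ)) = 0 := by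
  simpa using circleIntegral.integral_const_mul 0 (fun _ => (1:ℂ)) c R

lemma circleIntegral_sum {ι : Type*} (s : Finset ι) (f : ι → ℂ → ℂ) (c : ℂ) (R : ℝ)
    (hf : ∀ i ∈ s, CircleIntegrable (f i) c R) :
    (∮ w in C(c, R), ∑ i ∈ s, f i w) = ∑ i ∈ s, ∮ w in C(c, R), f i w := by
  classical
  induction s using Finset.induction with
  | empty => simpa using circleIntegral_zero c R
  | @insert a s' ha ih =>
      simp only [Finset.sum_insert ha]
      have hadd := circleIntegral_add (hf a (Finset.mem_insert_self a s'))
        (circleIntegrable_sum s' f c R fun i hi => hf i (Finset.mem_insert_of_mem hi))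
      rw [hadd, ih fun i hi => hf i (Finset.mem_insert_of_mem hi)]

/-- the duality relation
e^{tL}(x,y) = −(λ(x)/λ(y)) [ Σ_{z=0}^{y} e^{tL}(x+1,z) − Σ_{z=0}^{y} e^{tL}(x,z) ]. -/
theorem stmt_1 (lam : ℕ → ℝ) (s M : ℝ) (hs : 0 < s)
    (hlb : ∀ x, s ≤ lam x) (hub : ∀ x, lam x ≤ M)
    (R : ℝ) (hR : M < R) (t : ℝ) (ht : 0 ≤ t) (x y : ℕ) :
    eL lam R t x y = -((lam x : ℂ) / (lam y : ℂ)) *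
      ((∑ z ∈ Finset.range (y + 1), eL lam R t (x + 1) z) -
       (∑ z ∈ Finset.range (y + 1), eL lam R t x z)) := by
  classical
  have hspos : ∀ k, 0 < lam k := fun k => lt_of_lt_of_le hs (hlb k)
  have hM : 0 < M := lt_of_lt_of_le (hspos 0) (hub 0)
  have h0R : (0:ℝ) ≤ R := (hM.trans hR).le
  have h1 : ∀ k, (lam k : ℂ) ≠ 0 := fun k => Complex.ofReal_ne_zero.mpr (hspos k).ne'
  have hsphere : ∀ w ∈ Metric.sphere (0:ℂ) R, ∀ k, (lam k : ℂ) - w ≠ 0 := by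
    intro w hw k
    have hw' : ‖w‖ = R := by simpa using hw
    rw [sub_ne_zero]
    intro h
    rw [← h] at hw'
    have hlk : lam k = R := by
      simpa [Complex.norm_real, Real.norm_eq_abs, abs_of_pos (hspos k)] using hw'
    linarith [hub k]
  -- continuity facts
  have hcontPsi : ∀ z : ℕ, ContinuousOn (fun w => psiF lam z w) (Metric.sphere (0:ℂ) R) := by
    intro z
    unfold psiF
    apply continuousOn_finset_prod
    intro k _
    exact continuousOn_const.div (continuousOn_const.sub continuousOn_id)
      (fun w hw => hsphere w hw k)
  have hcontP : ∀ x' : ℕ, Continuous (fun w => pF lam x' w) := by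
    intro x'
    unfold pF
    exact continuous_finset_prod _ fun k _ =>
      (continuous_const.sub continuous_id).div_const _
  have hcontf : Continuous (fun w : ℂ => Complex.exp (-(t : ℂ) * w)) :=
    Complex.continuous_exp.comp (continuous_const.mul continuous_id)
  -- shorthand
  set c : ℂ := (2 * (Real.pi : ℂ) * Complex.I)⁻¹ with hc
  set f : ℂ → ℂ := fun w => Complex.exp (-(t : ℂ) * w) with hf
  -- integrability facts
  have hIg : ∀ (x' z : ℕ),
      CircleIntegrable (fun w => -(1 / (lam z : ℂ)) * (psiF lam z w * (pF lam x' w * f w))) 0 R :=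
    fun x' z => (continuousOn_const.mul ((hcontPsi z).mul
      (((hcontP x').mul hcontf).continuousOn))).circleIntegrable h0R
  have hIT : ∀ x' : ℕ, CircleIntegrable
      (fun w => (∑ z ∈ Finset.range (y+1), -(1 / (lam z : ℂ)) * psiF lam z w) *
        (pF lam x' w * f w)) 0 R := by
    intro x'
    apply ContinuousOn.circleIntegrable h0R
    exact (continuousOn_finset_sum _ fun z _ => continuousOn_const.mul (hcontPsi z)).mul
      (((hcontP x').mul hcontf).continuousOn)
  have hIA : CircleIntegrable (fun w => psiF lam y w * (pF lam x w * f w)) 0 R :=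
    ((hcontPsi y).mul (((hcontP x).mul hcontf).continuousOn)).circleIntegrable h0R
  have hIB : CircleIntegrable (fun w => pF lam x w * f w) 0 R :=
    (((hcontP x).mul hcontf).continuousOn).circleIntegrable h0R
  -- key: sums of eL as a single contour integral
  have key : ∀ x' : ℕ, (∑ z ∈ Finset.range (y + 1), eL lam R t x' z)
      = c * ∮ w in C(0, R), (∑ z ∈ Finset.range (y+1), -(1 / (lam z : ℂ)) * psiF lam z w) *
          (pF lam x' w * f w) := by
    intro x'
    have hrw : (∮ w in C(0, R), (∑ z ∈ Finset.range (y+1), -(1 / (lam z : ℂ)) * psiF lam z w) *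
          (pF lam x' w * f w))
        = ∮ w in C(0, R), ∑ z ∈ Finset.range (y+1),
            -(1 / (lam z : ℂ)) * (psiF lam z w * (pF lam x' w * f w)) := by
      apply circleIntegral.integral_congr h0R
      intro w _
      simp only [Finset.sum_mul]
      exact Finset.sum_congr rfl fun z _ => by ring
    rw [hrw, circleIntegral_sum _ _ _ _ (fun z _ => hIg x' z), Finset.mul_sum]
    apply Finset.sum_congr rfl
    intro z _
    rw [circleIntegral.integral_const_mul]
    have : (∮ w in C(0, R), psiF lam z w * pF lam x' w * Complex.exp (-(t : ℂ) * w))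
        = ∮ w in C(0, R), psiF lam z w * (pF lam x' w * f w) := by
      apply circleIntegral.integral_congr h0R
      intro w _
      simp only [hf]
      ring
    rw [eL, this]
    ring
  -- the entire-function integral vanishes
  have hzero : (∮ w in C(0, R), pF lam x w * f w) = 0 := by
    apply circleIntegral_eq_zero_of_differentiable_on_off_countable h0R Set.countable_empty
    · exact ((hcontP x).mul hcontf).continuousOn
    · intro z _
      apply DifferentiableAt.mul
      · have : Differentiable ℂ (fun w => pF lam x w) := by
          unfold pF
          exact fun w => DifferentiableAt.fun_finsetProd fun k _ =>
            ((differentiableAt_const _).sub differentiableAt_id).div_const _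
        exact this z
      · exact ((differentiableAt_const _).mul differentiableAt_id).cexp
  -- pointwise identity on the circle
  have hpt : ∀ w ∈ Metric.sphere (0:ℂ) R,
      (lam x : ℂ) * ((∑ z ∈ Finset.range (y+1), -(1 / (lam z : ℂ)) * psiF lam z w) *
          (pF lam (x+1) w * f w)
        - (∑ z ∈ Finset.range (y+1), -(1 / (lam z : ℂ)) * psiF lam z w) * (pF lam x w * f w))
      = psiF lam y w * (pF lam x w * f w) - pF lam x w * f w := by
    intro w hw
    have hp1 := P1 lam w h1 (hsphere w hw) y
    have hp2 := P2 lam w x (h1 x)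
    have hS : (∑ z ∈ Finset.range (y+1), -(1 / (lam z : ℂ)) * psiF lam z w)
        = -(∑ z ∈ Finset.range (y+1), (1 / (lam z : ℂ)) * psiF lam z w) := by
      simp [neg_mul]
    rw [hS]
    set A := ∑ z ∈ Finset.range (y+1), (1 / (lam z : ℂ)) * psiF lam z w with hA
    linear_combination (-(A) * f w) * hp2 + (pF lam x w * f w) * hp1
  -- main chain
  rw [key (x+1), key x]
  have hsub : c * (∮ w in C(0, R), (∑ z ∈ Finset.range (y+1), -(1 / (lam z : ℂ)) * psiF lam z w) *
          (pF lam (x+1) w * f w))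
      - c * (∮ w in C(0, R), (∑ z ∈ Finset.range (y+1), -(1 / (lam z : ℂ)) * psiF lam z w) *
          (pF lam x w * f w))
      = c * ∮ w in C(0, R),
          ((∑ z ∈ Finset.range (y+1), -(1 / (lam z : ℂ)) * psiF lam z w) * (pF lam (x+1) w * f w)
          - (∑ z ∈ Finset.range (y+1), -(1 / (lam z : ℂ)) * psiF lam z w) * (pF lam x w * f w)) := by
    rw [circleIntegral.integral_sub (hIT (x+1)) (hIT x), mul_sub]
  rw [hsub]
  have hconst : (∮ w in C(0, R), (lam x : ℂ) *
        ((∑ z ∈ Finset.range (y+1), -(1 / (lam z : ℂ)) * psiF lam z w) * (pF lam (x+1) w * f w)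
        - (∑ z ∈ Finset.range (y+1), -(1 / (lam z : ℂ)) * psiF lam z w) * (pF lam x w * f w)))
      = (lam x : ℂ) * ∮ w in C(0, R),
        ((∑ z ∈ Finset.range (y+1), -(1 / (lam z : ℂ)) * psiF lam z w) * (pF lam (x+1) w * f w)
        - (∑ z ∈ Finset.range (y+1), -(1 / (lam z : ℂ)) * psiF lam z w) * (pF lam x w * f w)) :=
    circleIntegral.integral_const_mul _ _ _ _
  have hcongr : (∮ w in C(0, R), (lam x : ℂ) *
        ((∑ z ∈ Finset.range (y+1), -(1 / (lam z : ℂ)) * psiF lam z w) * (pF lam (x+1) w * f w)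
        - (∑ z ∈ Finset.range (y+1), -(1 / (lam z : ℂ)) * psiF lam z w) * (pF lam x w * f w)))
      = ∮ w in C(0, R), (psiF lam y w * (pF lam x w * f w) - pF lam x w * f w) :=
    circleIntegral.integral_congr h0R hpt
  have hsplit : (∮ w in C(0, R), (psiF lam y w * (pF lam x w * f w) - pF lam x w * f w))
      = (∮ w in C(0, R), psiF lam y w * (pF lam x w * f w)) - ∮ w in C(0, R), pF lam x w * f w :=
    circleIntegral.integral_sub hIA hIB
  have hmain : ((lam x : ℂ) * ∮ w in C(0, R),
        ((∑ z ∈ Finset.range (y+1), -(1 / (lam z : ℂ)) * psiF lam z w) * (pF lam (x+1) w * f w)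
        - (∑ z ∈ Finset.range (y+1), -(1 / (lam z : ℂ)) * psiF lam z w) * (pF lam x w * f w)))
      = ∮ w in C(0, R), psiF lam y w * (pF lam x w * f w) := by
    rw [← hconst, hcongr, hsplit, hzero, sub_zero]
  have hIeq : (∮ w in C(0, R), psiF lam y w * pF lam x w * Complex.exp (-(t : ℂ) * w))
      = ∮ w in C(0, R), psiF lam y w * (pF lam x w * f w) := by
    apply circleIntegral.integral_congr h0R
    intro w _
    simp only [hf]
    ring
  have heL : eL lam R t x y = -(1 / (lam y : ℂ)) * (c * ∮ w in C(0, R),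
      psiF lam y w * (pF lam x w * f w)) := by
    rw [eL, hIeq, hc]
  rw [heL, ← hmain]
  ring
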